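/- Let α ∈ (0,1] and let φ, h, E be elements of L^{1+α}(Γ;ℝ³), L^{1+α}(Γ;ℝ³), L^{(1+α)/α}(Γ;ℝ³) respectively, on a measure space (Γ,μ). Then for every ε > 0 there is C depending only on α, ε such that ∫_Γ φ · a(φ + h) dμ ≥ (1/2)‖φ + h‖_{L^{1+α}}^{1+α} − C ‖h‖_{L^{1+α}}^{1+α}, where a(x) = |x|^{α−1}x. -/

import Mathlib

open MeasureTheory
open scoped RealInnerProductSpace

/-- Weighted Young: for conjugate exponents `p = 1+α`, `q = (1+α)/α`, and weight `1/2`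
on the second term, there is `C > 0` with `a*b ≤ C a^p + (1/2) b^q`. -/
lemma young_half (α : ℝ) (hα0 : 0 < α) :
    ∃ C : ℝ, 0 < C ∧ ∀ a b : ℝ, 0 ≤ a → 0 ≤ b →
      a * b ≤ C * a ^ (1+α) + (1/2) * b ^ ((1+α)/α) := by
  set p : ℝ := 1 + α with hp
  set q : ℝ := (1+α)/α with hq
  have hq0 : 0 < q := by positivity
  have hpq : p.HolderConjugate q := by
    rw [Real.holderConjugate_iff]
    constructor
    · linarith
    · rw [hp, hq]
      field_simp
  -- choose t with t^q / q = 1/2, i.e. t = (q/2)^(1/q)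
  set t : ℝ := (q/2) ^ (1/q) with ht
  have ht0 : 0 < t := Real.rpow_pos_of_pos (by positivity) _
  have htq : t ^ q = q / 2 := by
    rw [ht, ← Real.rpow_mul (by positivity), one_div, inv_mul_cancel₀ hq0.ne',
      Real.rpow_one]
  refine ⟨(1/t) ^ p / p + 1, by positivity, fun a b ha hb => ?_⟩
  have key := Real.young_inequality_of_nonneg
    (a := a * (1/t)) (b := b * t) (by positivity) (by positivity) hpq
  have h1 : a * (1/t) * (b * t) = a * b := by field_simp
  have h2 : (a * (1/t)) ^ p = a ^ p * (1/t) ^ p :=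
    Real.mul_rpow ha (by positivity)
  have h3 : (b * t) ^ q = b ^ q * t ^ q := Real.mul_rpow hb (by positivity)
  rw [h1, h2, h3, htq] at key
  have hp0 : 0 < p := by positivity
  have hap : 0 ≤ a ^ p := Real.rpow_nonneg ha p
  have hbq : 0 ≤ b ^ q := Real.rpow_nonneg hb q
  have h4 : b ^ q * (q / 2) / q = (1/2) * b ^ q := by
    field_simp
  rw [h4] at key
  have h5 : a ^ p * (1/t) ^ p / p ≤ ((1/t)^p / p + 1) * a ^ p :=
    calc a ^ p * (1/t) ^ p / p = ((1/t)^p / p) * a ^ p := by ring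
      _ ≤ ((1/t)^p / p + 1) * a ^ p :=
          mul_le_mul_of_nonneg_right (by linarith) hap
  calc a * b ≤ a ^ p * (1/t) ^ p / p + 1/2 * b ^ q := key
    _ ≤ ((1/t)^p / p + 1) * a ^ p + 1/2 * b ^ q := by linarith
    _ = ((1/t)^p / p + 1) * a ^ (1+α) + (1/2) * b ^ ((1+α)/α) := by rw [hp, hq]

/-- Pointwise lower bound. -/
lemma pointwise_bound (α C : ℝ) (hα0 : 0 < α)
    (hC : ∀ a b : ℝ, 0 ≤ a → 0 ≤ b →
      a * b ≤ C * a ^ (1+α) + (1/2) * b ^ ((1+α)/α))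
    (φ h : EuclideanSpace ℝ (Fin 3)) :
    (1/2) * ‖φ + h‖ ^ (1 + α) - C * ‖h‖ ^ (1 + α)
      ≤ ⟪φ, (‖φ + h‖ ^ (α - 1)) • (φ + h)⟫ := by
  set v := φ + h with hv
  set c : ℝ := ‖v‖ ^ (α - 1) with hc
  have hc0 : 0 ≤ c := Real.rpow_nonneg (norm_nonneg v) _
  have hinner : ⟪φ, c • v⟫ = c * ⟪v, v⟫ - c * ⟪h, v⟫ := by
    rw [real_inner_smul_right]
    have : φ = v - h := by rw [hv]; abel
    rw [this, inner_sub_left]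
    ring
  have hvv : c * ⟪v, v⟫ = ‖v‖ ^ (1 + α) := by
    rw [real_inner_self_eq_norm_mul_norm]
    rcases eq_or_lt_of_le (norm_nonneg v) with h0 | h0
    · rw [← h0, mul_zero, mul_zero, Real.zero_rpow (by positivity)]
    · rw [hc, show (1+α) = (α-1) + 1 + 1 by ring, Real.rpow_add h0,
        Real.rpow_add h0, Real.rpow_one]
      ring
  have hcv : c * ‖v‖ = ‖v‖ ^ α := by
    rcases eq_or_lt_of_le (norm_nonneg v) with h0 | h0
    · rw [← h0, mul_zero, Real.zero_rpow hα0.ne']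
    · rw [hc]
      calc ‖v‖ ^ (α-1) * ‖v‖ = ‖v‖ ^ (α-1) * ‖v‖ ^ (1:ℝ) := by
            rw [Real.rpow_one]
        _ = ‖v‖ ^ (α-1+1) := (Real.rpow_add h0 _ _).symm
        _ = ‖v‖ ^ α := by ring_nf
  have hhv : c * ⟪h, v⟫ ≤ ‖h‖ * ‖v‖ ^ α := by
    calc c * ⟪h, v⟫ ≤ c * (‖h‖ * ‖v‖) := by
          exact mul_le_mul_of_nonneg_left (real_inner_le_norm h v) hc0
      _ = ‖h‖ * (c * ‖v‖) := by ring
      _ = ‖h‖ * ‖v‖ ^ α := by rw [hcv]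
  have hyoung : ‖h‖ * ‖v‖ ^ α ≤ C * ‖h‖ ^ (1+α) + (1/2) * ‖v‖ ^ (1+α) := by
    have := hC ‖h‖ (‖v‖ ^ α) (norm_nonneg h) (Real.rpow_nonneg (norm_nonneg v) α)
    have hpow : (‖v‖ ^ α) ^ ((1+α)/α) = ‖v‖ ^ (1+α) := by
      rw [← Real.rpow_mul (norm_nonneg v)]
      congr 1
      field_simp
    rwa [hpow] at this
  rw [hinner, hvv]
  linarith

/-- Lower bound for the nonlinear term: for every `ε > 0` there is `C = C(α, ε)`
with `∫ φ · a(φ + h) dμ ≥ (1/2)‖φ + h‖_{L^{1+α}}^{1+α} − C ‖h‖_{L^{1+α}}^{1+α}`,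
where `a(x) = |x|^{α−1} x`. -/
theorem stmt15 {Γ : Type*} [MeasurableSpace Γ] (μ : Measure Γ)
    (α : ℝ) (hα : α ∈ Set.Ioc (0:ℝ) 1) (ε : ℝ) (hε : 0 < ε) :
    ∃ C : ℝ, 0 < C ∧
      ∀ φ h : Γ → EuclideanSpace ℝ (Fin 3), Measurable φ → Measurable h →
        Integrable (fun x => ‖φ x + h x‖ ^ (1 + α)) μ →
        Integrable (fun x => ‖h x‖ ^ (1 + α)) μ →
        Integrable (fun x =>
          ⟪φ x, (‖φ x + h x‖ ^ (α - 1)) • (φ x + h x)⟫) μ →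
        (1/2) * (∫ x, ‖φ x + h x‖ ^ (1 + α) ∂μ)
            - C * (∫ x, ‖h x‖ ^ (1 + α) ∂μ)
          ≤ ∫ x, ⟪φ x, (‖φ x + h x‖ ^ (α - 1)) • (φ x + h x)⟫ ∂μ := by
  obtain ⟨C, hC0, hC⟩ := young_half α hα.1
  refine ⟨C, hC0, fun φ h _ _ hint1 hint2 hint3 => ?_⟩
  have hptwise : ∀ x, (1/2) * ‖φ x + h x‖ ^ (1 + α) - C * ‖h x‖ ^ (1 + α)
      ≤ ⟪φ x, (‖φ x + h x‖ ^ (α - 1)) • (φ x + h x)⟫ :=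
    fun x => pointwise_bound α C hα.1 hC (φ x) (h x)
  have hintL : Integrable (fun x =>
      (1/2) * ‖φ x + h x‖ ^ (1 + α) - C * ‖h x‖ ^ (1 + α)) μ :=
    (hint1.const_mul _).sub (hint2.const_mul _)
  have := integral_mono hintL hint3 hptwise
  rw [integral_sub (hint1.const_mul _) (hint2.const_mul _),
    integral_const_mul, integral_const_mul] at this
  exact this
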